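/- If f : ℝ → ℝ is continuous and for every x ∈ ℝ the sequence f(x + log n) tends to 0 as n → ∞, then f(x) → 0 as x → ∞. -/

import Mathlib

open Filter Real Set

theorem croft_log (f : ℝ → ℝ) (hf : Continuous f)
    (h : ∀ x : ℝ, Filter.Tendsto (fun n : ℕ => f (x + Real.log n)) Filter.atTop (nhds 0)) :
    Filter.Tendsto f Filter.atTop (nhds 0) := by
  rw [Metric.tendsto_nhds]
  intro ε hε
  rw [eventually_atTop]
  set F : ℕ → Set ℝ := fun N => {x | ∀ n, N ≤ n → |f (x + Real.log n)| ≤ ε / 2} with hFdef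
  have hclosed : ∀ N, IsClosed (F N) := by
    intro N
    have hEq : F N = ⋂ n, ⋂ _ : N ≤ n, {x : ℝ | |f (x + Real.log n)| ≤ ε / 2} := by
      ext x; simp [hFdef, Set.mem_iInter]
    rw [hEq]
    refine isClosed_iInter fun n => isClosed_iInter fun _ => ?_
    exact isClosed_le (continuous_abs.comp (hf.comp (continuous_id.add continuous_const)))
      continuous_const
  have hcover : ⋃ N, F N = Set.univ := by
    ext x
    simp only [Set.mem_iUnion, Set.mem_univ, iff_true]
    obtain ⟨N, hN⟩ := Metric.tendsto_atTop.mp (h x) (ε / 2) (by positivity)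
    refine ⟨N, fun n hn => ?_⟩
    have := hN n hn
    rw [Real.dist_eq, sub_zero] at this
    exact this.le
  obtain ⟨N, x₀, hx₀⟩ := nonempty_interior_of_iUnion_of_closed hclosed hcover
  obtain ⟨r, hr, hball⟩ := Metric.isOpen_iff.mp isOpen_interior x₀ hx₀
  set a : ℝ := x₀ - r / 2 with ha
  set b : ℝ := x₀ + r / 2 with hb
  have hsub : Set.Icc a b ⊆ F N := by
    intro y hy
    refine interior_subset (hball ?_)
    rw [Metric.mem_ball, Real.dist_eq, abs_lt]
    constructor <;> [skip; skip] <;> cases hy with | intro h1 h2 => simp [ha, hb] at h1 h2 ⊢ <;> linarith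
  set n₀ : ℕ := max (max N 1) (⌈1 / r⌉₊ + 1) with hn₀
  have hn₀N : N ≤ n₀ := le_trans (le_max_left _ _) (le_max_left _ _)
  have hn₀1 : 1 ≤ n₀ := le_trans (le_max_right _ _) (le_max_left _ _)
  have hn₀pos : (0 : ℝ) < n₀ := by exact_mod_cast hn₀1
  have hinv : 1 / (n₀ : ℝ) < r := by
    have h1 : 1 / r < (⌈1 / r⌉₊ + 1 : ℝ) := by
      have := Nat.le_ceil (1 / r)
      push_cast
      linarith
    have h2 : ((⌈1 / r⌉₊ + 1 : ℕ) : ℝ) ≤ (n₀ : ℝ) := by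
      exact_mod_cast le_max_right (max N 1) (⌈1 / r⌉₊ + 1)
    have h3 : 1 / r < (n₀ : ℝ) := by push_cast at h2 ⊢; linarith
    rw [div_lt_iff₀ hn₀pos]
    rw [div_lt_iff₀ hr] at h3
    linarith
  refine ⟨b + Real.log n₀, fun y hy => ?_⟩
  set n : ℕ := ⌊Real.exp (y - a)⌋₊ with hn
  have hlogn₀ : Real.exp (y - a) ≥ (n₀ : ℝ) := by
    have : Real.log n₀ ≤ y - a := by
      have hba : b - a = r := by simp [ha, hb]
      have : y - a ≥ r + Real.log n₀ := by
        have : y - b ≥ Real.log n₀ := by linarith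
        linarith
      linarith
    calc (n₀ : ℝ) = Real.exp (Real.log n₀) := (Real.exp_log hn₀pos).symm
      _ ≤ Real.exp (y - a) := Real.exp_le_exp.mpr this
  have hnn₀ : n₀ ≤ n := Nat.le_floor hlogn₀
  have hn1 : 1 ≤ n := le_trans hn₀1 hnn₀
  have hnpos : (0 : ℝ) < n := by exact_mod_cast hn1
  have hfl : (n : ℝ) ≤ Real.exp (y - a) := Nat.floor_le (Real.exp_nonneg _)
  have hub : Real.exp (y - a) < (n : ℝ) + 1 := Nat.lt_floor_add_one _
  have hlog_le : Real.log n ≤ y - a := by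
    calc Real.log n ≤ Real.log (Real.exp (y - a)) :=
      Real.log_le_log (by positivity) hfl
      _ = y - a := Real.log_exp _
  have hlog_gt : y - a < Real.log (n + 1) := by
    calc y - a = Real.log (Real.exp (y - a)) := (Real.log_exp _).symm
      _ < Real.log ((n : ℝ) + 1) := Real.log_lt_log (Real.exp_pos _) hub
  have hlog_step : Real.log ((n : ℝ) + 1) ≤ Real.log n + 1 / n := by
    have hdiv : Real.log (((n : ℝ) + 1) / n) ≤ ((n : ℝ) + 1) / n - 1 :=
      Real.log_le_sub_one_of_pos (by positivity)
    rw [Real.log_div (by positivity) (by positivity)] at hdiv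
    have : ((n : ℝ) + 1) / n - 1 = 1 / n := by field_simp; ring
    linarith [this ▸ hdiv]
  have hinvn : 1 / (n : ℝ) ≤ 1 / (n₀ : ℝ) := by
    apply one_div_le_one_div_of_le hn₀pos
    exact_mod_cast hnn₀
  have hba : b - a = r := by simp [ha, hb]
  have hx_mem : y - Real.log n ∈ Set.Icc a b := by
    constructor
    · linarith
    · have : y - a < Real.log n + r := by linarith
      linarith
  have hmem := hsub hx_mem n (le_trans hn₀N hnn₀)
  have hyeq : y - Real.log n + Real.log n = y := by ring
  rw [hyeq] at hmem
  rw [Real.dist_eq, sub_zero]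
  linarith
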